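/- For the RCA with initial state (α, β, γ) where |β| = |γ| > 0, α ≠ 0, and arg β + arg γ − 2·arg α ≡ π (mod 2π), the distribution is symmetric for all time: |X(k, n)| = |X(−k, n)| for all k ∈ ℤ, n ∈ ℕ. -/

import Mathlib

open Complex in
private lemma stmt10_aux (α β γ : ℂ) (hβγ : ‖β‖ = ‖γ‖)
    (harg : ∃ m : ℤ, β.arg + γ.arg - 2 * α.arg = Real.pi + 2 * Real.pi * m) :
    γ * (starRingEnd ℂ) α = -(α * (starRingEnd ℂ) β) := by
  obtain ⟨m, hm⟩ := harg
  have ha := Complex.norm_mul_exp_arg_mul_I α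
  have hb := Complex.norm_mul_exp_arg_mul_I β
  have hg := Complex.norm_mul_exp_arg_mul_I γ
  have hca : (starRingEnd ℂ) α = ((‖α‖ : ℝ) : ℂ) * Complex.exp (-(α.arg:ℂ) * I) := by
    conv_lhs => rw [← ha]
    rw [map_mul, ← Complex.exp_conj, map_mul, Complex.conj_I, Complex.conj_ofReal,
      Complex.conj_ofReal]
    ring_nf
  have hcb : (starRingEnd ℂ) β = ((‖β‖ : ℝ) : ℂ) * Complex.exp (-(β.arg:ℂ) * I) := by
    conv_lhs => rw [← hb]
    rw [map_mul, ← Complex.exp_conj, map_mul, Complex.conj_I, Complex.conj_ofReal,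
      Complex.conj_ofReal]
    ring_nf
  have habs : ‖β‖ = ‖γ‖ := by
    simpa using hβγ
  have key : Complex.exp ((γ.arg : ℂ) * I) * Complex.exp (-(α.arg:ℂ) * I)
      = -(Complex.exp ((α.arg:ℂ)*I) * Complex.exp (-(β.arg:ℂ)*I)) := by
    have hm' : (γ.arg : ℝ) + -α.arg = (α.arg + -β.arg) + Real.pi + 2*Real.pi*m := by linarith
    have hmc : ((γ.arg : ℂ)) * I + -(α.arg:ℂ) * I
        = ((α.arg:ℂ)*I + -(β.arg:ℂ)*I) + (Real.pi:ℂ)*I + (m:ℂ) * (2*(Real.pi:ℂ)*I) := by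
      have := congrArg (Complex.ofReal) hm'
      push_cast at this
      linear_combination I * this
    rw [← Complex.exp_add, hmc, Complex.exp_add, Complex.exp_add,
      Complex.exp_int_mul_two_pi_mul_I, Complex.exp_pi_mul_I, Complex.exp_add]
    ring
  conv_lhs => rw [← hg, hca]
  conv_rhs => rw [hcb, habs]
  conv_rhs => rw [← ha]
  linear_combination ((‖γ‖ : ℝ):ℂ) * ((‖α‖ : ℝ) : ℂ) * key

theorem stmt10 (θ : ℝ) (α β γ : ℂ) (hβγ : ‖β‖ = ‖γ‖) (hpos : 0 < ‖β‖) (hα : α ≠ 0)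
    (harg : ∃ m : ℤ, Complex.arg β + Complex.arg γ - 2 * Complex.arg α
      = Real.pi + 2 * Real.pi * m)
    (X : ℤ × ℕ → ℂ)
    (hrec : ∀ (k : ℤ) (n : ℕ),
      X (k, n + 2) = (Real.cos θ : ℂ) * (X (k + 1, n + 1) - X (k - 1, n + 1)) + X (k, n))
    (h00 : X (0, 0) = α) (hm1 : X (-1, 1) = β) (hp1 : X (1, 1) = γ)
    (h0 : ∀ k : ℤ, k ≠ 0 → X (k, 0) = 0)
    (h1 : ∀ k : ℤ, k ≠ -1 → k ≠ 1 → X (k, 1) = 0) :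
    ∀ (k : ℤ) (n : ℕ), ‖X (k, n)‖ = ‖X (-k, n)‖ := by
  have hcα : (starRingEnd ℂ) α ≠ 0 := by
    simpa using hα
  set μ : ℂ := α / (starRingEnd ℂ) α with hμdef
  have hμ1 : ‖μ‖ = 1 := by
    have : ‖α‖ ≠ 0 := norm_ne_zero_iff.mpr hα
    simp [hμdef, norm_div, RCLike.norm_conj, div_self this]
  have hγ : γ = -μ * (starRingEnd ℂ) β := by
    have h := stmt10_aux α β γ hβγ harg
    rw [hμdef, neg_mul, div_mul_eq_mul_div, eq_neg_iff_add_eq_zero, add_div' _ _ _ hcα,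
      div_eq_zero_iff]
    left
    linear_combination h
  have hβ : β = -μ * (starRingEnd ℂ) γ := by
    have harg' : ∃ m : ℤ, γ.arg + β.arg - 2 * α.arg = Real.pi + 2 * Real.pi * m := by
      obtain ⟨m, hm⟩ := harg; exact ⟨m, by linarith⟩
    have h := stmt10_aux α γ β hβγ.symm harg'
    rw [hμdef, neg_mul, div_mul_eq_mul_div, eq_neg_iff_add_eq_zero, add_div' _ _ _ hcα,
      div_eq_zero_iff]
    left
    linear_combination h
  have hμα : μ * (starRingEnd ℂ) α = α := div_mul_cancel₀ α hcα
  have main : ∀ n : ℕ, ∀ k : ℤ, X (k, n) = (-1:ℂ)^n * μ * (starRingEnd ℂ) (X (-k, n)) := by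
    intro n
    induction n using Nat.strong_induction_on with
    | _ n ih =>
      match n with
      | 0 =>
        intro k
        rcases eq_or_ne k 0 with rfl | hk
        · simp only [neg_zero, h00, pow_zero, one_mul]
          exact hμα.symm
        · rw [h0 k hk, h0 (-k) (neg_ne_zero.mpr hk)]
          simp
      | 1 =>
        intro k
        rcases eq_or_ne k 1 with rfl | hk1
        · rw [hp1, show -(1:ℤ) = -1 from rfl, hm1]
          rw [hγ]; ring
        · rcases eq_or_ne k (-1) with rfl | hkm
          · rw [hm1, neg_neg, hp1]
            rw [hβ]; ring
          · rw [h1 k hkm hk1, h1 (-k) (by omega) (by omega)]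
            simp
      | (m+2) =>
        intro k
        rw [hrec k m, hrec (-k) m]
        have i1 := ih (m+1) (by omega)
        have i0 := ih m (by omega)
        rw [i1 (k+1), i1 (k-1), i0 k,
          show (-(k+1) : ℤ) = -k - 1 by ring, show (-(k-1) : ℤ) = -k + 1 by ring]
        simp only [map_add, map_mul, map_sub, Complex.conj_ofReal]
        ring
  intro k n
  rw [main n k]
  rw [norm_mul, norm_mul, norm_pow, norm_neg, norm_one, one_pow, hμ1, RCLike.norm_conj]
  ring
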